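/- Let α ∈ ℝ be irrational and let φ_t(x, y, z) = (x + t, y + αt, z) be the flow on (AddCircle (1:ℝ))³ which is a linear flow with slope α in the first two coordinates and fixes the third coordinate. Then every point p ∈ (AddCircle 1)³ is recurrent: p belongs to its ω-limit set ω(p) and to its α-limit set α(p). -/

import Mathlib

/-- The flow on `(ℝ/ℤ)³` which is the linear flow with slope `α` in the first two
coordinates and fixes the third coordinate. -/
noncomputable def linearFlowT2xS1 (α : ℝ) (t : ℝ)
    (q : AddCircle (1 : ℝ) × AddCircle (1 : ℝ) × AddCircle (1 : ℝ)) :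
    AddCircle (1 : ℝ) × AddCircle (1 : ℝ) × AddCircle (1 : ℝ) :=
  (q.1 + (t : AddCircle (1 : ℝ)), q.2.1 + ((α * t : ℝ) : AddCircle (1 : ℝ)), q.2.2)

open Filter Set

/-- Natural multiples of an irrational point of the circle never vanish. -/
lemma nsmul_irrational_ne_zero (α : ℝ) (hα : Irrational α) {j : ℕ} (hj : 1 ≤ j) :
    ((j * α : ℝ) : AddCircle (1 : ℝ)) ≠ 0 := by
  intro h
  rw [AddCircle.coe_eq_zero_iff] at h
  obtain ⟨n, hn⟩ := h
  have hj' : (j : ℝ) ≠ 0 := Nat.cast_ne_zero.mpr (by omega)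
  apply hα
  refine ⟨(n : ℚ) / (j : ℚ), ?_⟩
  have : (n : ℝ) = j * α := by simpa using hn
  push_cast
  field_simp
  linarith [this]

/-- Key Diophantine lemma: for irrational `α`, there are arbitrarily large naturals `j`
with `j * α` arbitrarily close to `0` mod `1`. -/
lemma exists_large_nsmul_small (α : ℝ) (hα : Irrational α) (ε : ℝ) (hε : 0 < ε) (N : ℕ) :
    ∃ j : ℕ, N ≤ j ∧ ‖((j * α : ℝ) : AddCircle (1 : ℝ))‖ < ε := by
  haveI : Fact ((0 : ℝ) < 1) := ⟨one_pos⟩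
  set ξ : AddCircle (1 : ℝ) := ((α : ℝ) : AddCircle (1 : ℝ)) with hξ
  have hsm : ∀ j : ℕ, j • ξ = ((j * α : ℝ) : AddCircle (1 : ℝ)) := by
    intro j
    rw [hξ, ← AddCircle.coe_nsmul]
    norm_num
  -- δ : a positive lower bound
  set F : Finset ℝ := insert ε ((Finset.Icc 1 N).image fun j => ‖j • ξ‖) with hF
  have hFne : F.Nonempty := ⟨ε, Finset.mem_insert_self _ _⟩
  set δ : ℝ := F.min' hFne with hδdef
  have hδpos : 0 < δ := by
    rw [hδdef]
    apply (Finset.lt_min'_iff _ _).2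
    intro y hy
    rw [hF] at hy
    rcases Finset.mem_insert.1 hy with h | h
    · subst h; exact hε
    · obtain ⟨j, hj, rfl⟩ := Finset.mem_image.1 h
      have hj1 : 1 ≤ j := (Finset.mem_Icc.1 hj).1
      have := nsmul_irrational_ne_zero α hα hj1
      rw [← hsm] at this
      exact norm_pos_iff.mpr this
  set n : ℕ := ⌈1 / δ⌉₊ with hn
  have hn1 : 0 < n := by
    rw [hn]
    exact Nat.ceil_pos.2 (by positivity)
  obtain ⟨j, hjmem, hjle⟩ := AddCircle.exists_norm_nsmul_le (T := (1 : ℝ)) ξ hn1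
  have hlt : (1 : ℝ) / (n + 1 : ℕ) < δ := by
    rw [div_lt_iff₀ (by positivity)]
    have h1 : (1 : ℝ) / δ ≤ n := Nat.le_ceil _
    have : (1 : ℝ) / δ < n + 1 := lt_of_le_of_lt h1 (by push_cast; linarith)
    rw [div_lt_iff₀ hδpos] at this
    push_cast
    push_cast at this
    linarith
  have hjsmall : ‖j • ξ‖ < δ := lt_of_le_of_lt (by simpa using hjle) hlt
  have hδε : δ ≤ ε := Finset.min'_le _ _ (Finset.mem_insert_self _ _)
  refine ⟨j, ?_, by rw [← hsm]; exact lt_of_lt_of_le hjsmall hδε⟩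
  -- j must exceed N
  by_contra hjN
  push_neg at hjN
  have hj1 : 1 ≤ j := hjmem.1
  have hmem : ‖j • ξ‖ ∈ F := by
    rw [hF]
    exact Finset.mem_insert_of_mem (Finset.mem_image.2 ⟨j, Finset.mem_Icc.2 ⟨hj1, by omega⟩, rfl⟩)
  exact absurd (Finset.min'_le _ _ hmem) (not_le.2 hjsmall)

lemma nat_coe_addCircle_zero (j : ℕ) : (((j : ℝ)) : AddCircle (1 : ℝ)) = 0 := by
  rw [AddCircle.coe_eq_zero_iff]
  exact ⟨j, by simp⟩

lemma neg_nat_coe_addCircle_zero (j : ℕ) : ((-(j : ℝ) : ℝ) : AddCircle (1 : ℝ)) = 0 := by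
  rw [AddCircle.coe_eq_zero_iff]
  exact ⟨-j, by simp⟩

/-- for irrational `α`, every point of `(ℝ/ℤ)³` is recurrent for the flow
`φ_t(x, y, z) = (x + t, y + αt, z)`: it belongs to its ω-limit set and to its α-limit
set. -/
theorem linear_flow_T2xS1_recurrent (α : ℝ) (hα : Irrational α)
    (p : AddCircle (1 : ℝ) × AddCircle (1 : ℝ) × AddCircle (1 : ℝ)) :
    p ∈ omegaLimit Filter.atTop (linearFlowT2xS1 α) {p} ∧
    p ∈ omegaLimit Filter.atBot (linearFlowT2xS1 α) {p} := by
  haveI : Fact ((0 : ℝ) < 1) := ⟨one_pos⟩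
  -- the translation map
  set c : AddCircle (1 : ℝ) → AddCircle (1 : ℝ) × AddCircle (1 : ℝ) × AddCircle (1 : ℝ) :=
    fun v => (p.1, p.2.1 + v, p.2.2) with hc
  have hccont : Continuous c := by
    apply continuous_const.prodMk (Continuous.prodMk _ continuous_const)
    exact continuous_const.add continuous_id
  have hc0 : c 0 = p := by simp [hc]
  -- common core: for any nbhd `n` of `p` there is ε > 0 s.t. small second coord works
  have key : ∀ n ∈ nhds p, ∃ ε > 0, ∀ v : AddCircle (1 : ℝ), ‖v‖ < ε → c v ∈ n := by
    intro n hn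
    have : c ⁻¹' n ∈ nhds (0 : AddCircle (1 : ℝ)) := by
      have := hccont.continuousAt (x := (0 : AddCircle (1 : ℝ)))
      rw [ContinuousAt, hc0] at this
      exact this hn
    obtain ⟨ε, hε, hball⟩ := Metric.mem_nhds_iff.1 this
    exact ⟨ε, hε, fun v hv => hball (by simpa [Metric.mem_ball, dist_zero_right] using hv)⟩
  constructor
  · rw [mem_omegaLimit_singleton_iff_map_cluster_point, mapClusterPt_iff_frequently]
    intro n hn
    obtain ⟨ε, hε, hεsub⟩ := key n hn
    rw [frequently_atTop]
    intro a
    obtain ⟨j, hjN, hjsmall⟩ := exists_large_nsmul_small α hα ε hε ⌈max a 0⌉₊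
    refine ⟨(j : ℝ), ?_, ?_⟩
    · calc a ≤ max a 0 := le_max_left _ _
        _ ≤ ⌈max a 0⌉₊ := Nat.le_ceil _
        _ ≤ (j : ℝ) := by exact_mod_cast hjN
    · have h1 : linearFlowT2xS1 α (j : ℝ) p = c ((α * j : ℝ) : AddCircle (1 : ℝ)) := by
        simp only [linearFlowT2xS1, hc, nat_coe_addCircle_zero, add_zero]
      rw [h1]
      apply hεsub
      rw [show (α * (j : ℝ)) = (j : ℝ) * α by ring]
      exact hjsmall
  · rw [mem_omegaLimit_singleton_iff_map_cluster_point, mapClusterPt_iff_frequently]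
    intro n hn
    obtain ⟨ε, hε, hεsub⟩ := key n hn
    rw [frequently_atBot]
    intro a
    obtain ⟨j, hjN, hjsmall⟩ := exists_large_nsmul_small α hα ε hε ⌈max (-a) 0⌉₊
    refine ⟨-(j : ℝ), ?_, ?_⟩
    · have : -a ≤ (j : ℝ) := by
        calc -a ≤ max (-a) 0 := le_max_left _ _
          _ ≤ ⌈max (-a) 0⌉₊ := Nat.le_ceil _
          _ ≤ (j : ℝ) := by exact_mod_cast hjN
      linarith
    · have h1 : linearFlowT2xS1 α (-(j : ℝ)) p = c ((α * (-(j : ℝ)) : ℝ) : AddCircle (1 : ℝ)) := by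
        simp only [linearFlowT2xS1, hc, neg_nat_coe_addCircle_zero, add_zero]
      rw [h1]
      apply hεsub
      have : ((α * (-(j : ℝ)) : ℝ) : AddCircle (1 : ℝ)) = -(((j : ℝ) * α : ℝ) : AddCircle (1 : ℝ)) := by
        rw [← AddCircle.coe_neg]; ring_nf
      rw [this, norm_neg]
      exact hjsmall
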